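/- Let n ≥ 1, let j ∈ {1,…,n}, and let v be an n-dimensional unit vector all of whose entries lie in ℤ[1/(i√2)] = {x₀ + x₁·i√2 : x₀, x₁ ∈ ℤ[1/2]}. Then there exist finitely many generators G₁, …, G_ℓ, each taken from the set {(-1)_[a], X_[a,b], F_[a,b] : a, b distinct elements of {1,…,n}}, such that G₁ ⋯ G_ℓ v = e_j, the j-th standard basis vector. -/

import Mathlib

open Matrix Complex

noncomputable section

/-- The `m`-level operator of type `W` with indices `f 0, …, f (m-1)`:
for injective `f`, its `(f j', f k')` entry is `W j' k'` and it agrees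
with the identity matrix elsewhere. -/
def levelOp {n m : ℕ} (f : Fin m → Fin n) (W : Matrix (Fin m) (Fin m) ℂ) :
    Matrix (Fin n) (Fin n) ℂ := fun j k =>
  (∑ j' : Fin m, ∑ k' : Fin m, if f j' = j ∧ f k' = k then W j' k' else 0) +
  (if j = k ∧ ∀ j' : Fin m, f j' ≠ j then 1 else 0)

/-- The NOT gate `X`. -/
def Xmat : Matrix (Fin 2) (Fin 2) ℂ := !![0, 1; 1, 0]

/-- The Hadamard gate `H`. -/
def Hmat : Matrix (Fin 2) (Fin 2) ℂ := (Real.sqrt 2 : ℂ)⁻¹ • !![1, 1; 1, -1]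

/-- The gate `F = (1/2)[[1+i√2, 1],[1, -1+i√2]]`. -/
def Fmat : Matrix (Fin 2) (Fin 2) ℂ :=
  (2 : ℂ)⁻¹ • !![1 + Complex.I * Real.sqrt 2, 1; 1, -1 + Complex.I * Real.sqrt 2]

/-- `G` is one of the generators `(-1)_[a]`, `X_[a,b]`, `F_[a,b]` with `a ≠ b`. -/
def IsImGen {n : ℕ} (G : Matrix (Fin n) (Fin n) ℂ) : Prop :=
  (∃ a : Fin n, G = levelOp ![a] !![-1]) ∨
  (∃ a b : Fin n, a ≠ b ∧ G = levelOp ![a, b] Xmat) ∨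
  (∃ a b : Fin n, a ≠ b ∧ G = levelOp ![a, b] Fmat)

/-- `x` is a dyadic fraction: an element of `ℤ[1/2]` (viewed inside `ℂ`). -/
def IsDyadic (x : ℂ) : Prop := ∃ (u : ℤ) (q : ℕ), x = (u : ℂ) / 2 ^ q

/-- `x` belongs to the ring `ℤ[1/(i√2)] = {x₀ + x₁·i√2 : x₀, x₁ ∈ ℤ[1/2]}`. -/
def InDIrt2 (x : ℂ) : Prop :=
  ∃ x₀ x₁ : ℂ, IsDyadic x₀ ∧ IsDyadic x₁ ∧ x = x₀ + x₁ * (Complex.I * Real.sqrt 2)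

/-! ### auxiliary development -/

def ww : ℂ := Complex.I * Real.sqrt 2

lemma ww_sq : ww ^ 2 = -2 := by
  have h2 : ((Real.sqrt 2 : ℝ) : ℂ) ^ 2 = 2 := by
    rw [← Complex.ofReal_pow, Real.sq_sqrt (by norm_num : (2:ℝ) ≥ 0)]
    norm_num
  simp [ww, mul_pow, Complex.I_sq, h2]

lemma ww_ne : ww ≠ 0 := by
  intro h
  have := ww_sq
  rw [h] at this
  norm_num at this

def vecr {n : ℕ} (k : ℕ) (a b : Fin n → ℤ) : Fin n → ℂ :=
  fun i => ((a i : ℂ) + (b i : ℂ) * ww) / ww ^ k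

lemma levelOp2_mulVec {n : ℕ} (p q : Fin n) (hpq : p ≠ q) (W : Matrix (Fin 2) (Fin 2) ℂ)
    (v : Fin n → ℂ) :
    (levelOp ![p, q] W).mulVec v = fun i =>
      if i = p then W 0 0 * v p + W 0 1 * v q
      else if i = q then W 1 0 * v p + W 1 1 * v q
      else v i := by
  funext i
  simp only [mulVec, dotProduct, levelOp, Fin.sum_univ_two, Matrix.cons_val_zero,
    Matrix.cons_val_one, Matrix.head_cons]
  by_cases hip : i = p
  · subst hip
    simp [hpq, hpq.symm, add_mul, Finset.sum_add_distrib, Finset.sum_ite_eq,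
      Fin.forall_fin_two, Fin.forall_fin_one]
  · by_cases hiq : i = q
    · subst hiq
      simp [hpq, hpq.symm, hip, add_mul, Finset.sum_add_distrib, Finset.sum_ite_eq,
        Fin.forall_fin_two, Fin.forall_fin_one]
    · simp [Ne.symm hip, Ne.symm hiq, hip, hiq, add_mul, Finset.sum_add_distrib,
        Finset.sum_ite_eq, Fin.forall_fin_two, Fin.forall_fin_one]

lemma levelOp1_mulVec {n : ℕ} (p : Fin n) (W : Matrix (Fin 1) (Fin 1) ℂ)
    (v : Fin n → ℂ) :
    (levelOp ![p] W).mulVec v = fun i => if i = p then W 0 0 * v p else v i := by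
  funext i
  simp only [mulVec, dotProduct, levelOp, Fin.sum_univ_one, Matrix.cons_val_zero]
  by_cases hip : i = p
  · subst hip
    simp [add_mul, Finset.sum_add_distrib, Finset.sum_ite_eq, Fin.forall_fin_one]
  · simp [Ne.symm hip, hip, add_mul, Finset.sum_add_distrib, Finset.sum_ite_eq,
      Fin.forall_fin_one]

lemma F_mulVec {n : ℕ} (p q : Fin n) (hpq : p ≠ q) (v : Fin n → ℂ) :
    (levelOp ![p, q] Fmat).mulVec v = fun i =>
      if i = p then ((1 + ww) * v p + v q) / 2
      else if i = q then (v p + (-1 + ww) * v q) / 2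
      else v i := by
  rw [levelOp2_mulVec p q hpq]
  funext i
  have h00 : Fmat 0 0 = (1 + ww) / 2 := by simp [Fmat, ww]; ring
  have h01 : Fmat 0 1 = 1 / 2 := by simp [Fmat]
  have h10 : Fmat 1 0 = 1 / 2 := by simp [Fmat]
  have h11 : Fmat 1 1 = (-1 + ww) / 2 := by simp [Fmat, ww]; ring
  rw [h00, h01, h10, h11]
  split_ifs <;> ring

lemma X_mulVec {n : ℕ} (p q : Fin n) (hpq : p ≠ q) (v : Fin n → ℂ) :
    (levelOp ![p, q] Xmat).mulVec v = fun i =>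
      if i = p then v q else if i = q then v p else v i := by
  rw [levelOp2_mulVec p q hpq]
  funext i
  have h00 : Xmat 0 0 = 0 := by simp [Xmat]
  have h01 : Xmat 0 1 = 1 := by simp [Xmat]
  have h10 : Xmat 1 0 = 1 := by simp [Xmat]
  have h11 : Xmat 1 1 = 0 := by simp [Xmat]
  rw [h00, h01, h10, h11]
  split_ifs <;> ring

lemma N_mulVec {n : ℕ} (p : Fin n) (v : Fin n → ℂ) :
    (levelOp ![p] !![-1]).mulVec v = fun i => if i = p then -v p else v i := by
  rw [levelOp1_mulVec]
  funext i
  split_ifs <;> simp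

lemma FF1 (μ1 μ2 β1 β2 : ℂ) (k : ℕ) :
    ((1+ww)*(((1+ww)*(((2*μ1+1) + β1*ww)/ww^k) + (((2*μ2+1) + β2*ww)/ww^k))/2)
      + ((((2*μ1+1) + β1*ww)/ww^k) + (-1+ww)*(((2*μ2+1) + β2*ww)/ww^k))/2)/2
    = (-(β1+β2) + (μ1+μ2+1)*ww)/ww^k := by
  have key : (1+ww)*((1+ww)*((2*μ1+1) + β1*ww) + ((2*μ2+1) + β2*ww))
      + (((2*μ1+1) + β1*ww) + (-1+ww)*((2*μ2+1) + β2*ww))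
      = 4*(-(β1+β2) + (μ1+μ2+1)*ww) := by
    linear_combination ((2*μ1+1) + β1*ww + 2*(β1+β2))*ww_sq
  calc ((1+ww)*(((1+ww)*(((2*μ1+1) + β1*ww)/ww^k) + (((2*μ2+1) + β2*ww)/ww^k))/2)
      + ((((2*μ1+1) + β1*ww)/ww^k) + (-1+ww)*(((2*μ2+1) + β2*ww)/ww^k))/2)/2
      = ((1+ww)*((1+ww)*((2*μ1+1) + β1*ww) + ((2*μ2+1) + β2*ww))
        + (((2*μ1+1) + β1*ww) + (-1+ww)*((2*μ2+1) + β2*ww)))/ww^k/4 := by ring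
    _ = (4*(-(β1+β2) + (μ1+μ2+1)*ww))/ww^k/4 := by rw [key]
    _ = (-(β1+β2) + (μ1+μ2+1)*ww)/ww^k := by ring

lemma FF2 (μ1 μ2 β1 β2 : ℂ) (k : ℕ) :
    (((1+ww)*(((2*μ1+1) + β1*ww)/ww^k) + (((2*μ2+1) + β2*ww)/ww^k))/2
      + (-1+ww)*(((((2*μ1+1) + β1*ww)/ww^k) + (-1+ww)*(((2*μ2+1) + β2*ww)/ww^k))/2))/2
    = ((β2-β1) + (μ1-μ2)*ww)/ww^k := by
  have key : ((1+ww)*((2*μ1+1) + β1*ww) + ((2*μ2+1) + β2*ww))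
      + (-1+ww)*(((2*μ1+1) + β1*ww) + (-1+ww)*((2*μ2+1) + β2*ww))
      = 4*((β2-β1) + (μ1-μ2)*ww) := by
    linear_combination ((2*μ2+1) + β2*ww + 2*(β1-β2))*ww_sq
  calc (((1+ww)*(((2*μ1+1) + β1*ww)/ww^k) + (((2*μ2+1) + β2*ww)/ww^k))/2
      + (-1+ww)*(((((2*μ1+1) + β1*ww)/ww^k) + (-1+ww)*(((2*μ2+1) + β2*ww)/ww^k))/2))/2
      = (((1+ww)*((2*μ1+1) + β1*ww) + ((2*μ2+1) + β2*ww))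
        + (-1+ww)*(((2*μ1+1) + β1*ww) + (-1+ww)*((2*μ2+1) + β2*ww)))/ww^k/4 := by ring
    _ = (4*((β2-β1) + (μ1-μ2)*ww))/ww^k/4 := by rw [key]
    _ = ((β2-β1) + (μ1-μ2)*ww)/ww^k := by ring

lemma Fa (μ1 μ2 β1 β2 ρ : ℂ) (k : ℕ) (hρ : 2*ρ = (2*μ1+1) + β1 + β2) :
    ((1+ww)*(((2*μ1+1) + β1*ww)/ww^k) + (((2*μ2+1) + β2*ww)/ww^k))/2
    = ((μ1+μ2+1-β1) + ρ*ww)/ww^k := by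
  have key : (1+ww)*((2*μ1+1) + β1*ww) + ((2*μ2+1) + β2*ww)
      = 2*((μ1+μ2+1-β1) + ρ*ww) := by
    linear_combination β1*ww_sq - ww*hρ
  calc ((1+ww)*(((2*μ1+1) + β1*ww)/ww^k) + (((2*μ2+1) + β2*ww)/ww^k))/2
      = ((1+ww)*((2*μ1+1) + β1*ww) + ((2*μ2+1) + β2*ww))/ww^k/2 := by ring
    _ = (2*((μ1+μ2+1-β1) + ρ*ww))/ww^k/2 := by rw [key]
    _ = ((μ1+μ2+1-β1) + ρ*ww)/ww^k := by ring

lemma Fb (μ1 μ2 β1 β2 ρ : ℂ) (k : ℕ) (hρ : 2*ρ = β1 + (2*μ2+1) - β2) :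
    ((((2*μ1+1) + β1*ww)/ww^k) + (-1+ww)*(((2*μ2+1) + β2*ww)/ww^k))/2
    = ((μ1-μ2-β2) + ρ*ww)/ww^k := by
  have key : ((2*μ1+1) + β1*ww) + (-1+ww)*((2*μ2+1) + β2*ww)
      = 2*((μ1-μ2-β2) + ρ*ww) := by
    linear_combination β2*ww_sq - ww*hρ
  calc ((((2*μ1+1) + β1*ww)/ww^k) + (-1+ww)*(((2*μ2+1) + β2*ww)/ww^k))/2
      = (((2*μ1+1) + β1*ww) + (-1+ww)*((2*μ2+1) + β2*ww))/ww^k/2 := by ring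
    _ = (2*((μ1-μ2-β2) + ρ*ww))/ww^k/2 := by rw [key]
    _ = ((μ1-μ2-β2) + ρ*ww)/ww^k := by ring

lemma sum_diff_two {n : ℕ} (f g : Fin n → ℤ) (i₁ i₂ : Fin n) (h12 : i₁ ≠ i₂)
    (hout : ∀ i, i ≠ i₁ → i ≠ i₂ → g i = f i)
    (hsum : g i₁ + g i₂ = f i₁ + f i₂) : ∑ i, g i = ∑ i, f i := by
  have h1 : ∑ i, (g i - f i) = ∑ i ∈ ({i₁, i₂} : Finset (Fin n)), (g i - f i) :=
    (Finset.sum_subset (Finset.subset_univ _) (by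
      intro x _ hx
      simp only [Finset.mem_insert, Finset.mem_singleton] at hx
      push_neg at hx
      rw [hout x hx.1 hx.2]
      ring)).symm
  rw [Finset.sum_pair h12] at h1
  have h2 : ∑ i, (g i - f i) = ∑ i, g i - ∑ i, f i := Finset.sum_sub_distrib _ _
  rw [h2] at h1
  linarith

/-- The key pairing step. -/
lemma pair_step {n : ℕ} (k : ℕ) (i₁ i₂ : Fin n) (h12 : i₁ ≠ i₂) (a b : Fin n → ℤ)
    (h1 : ¬ Even (a i₁)) (h2 : ¬ Even (a i₂)) :
    ∃ (L : List (Matrix (Fin n) (Fin n) ℂ)) (a' b' : Fin n → ℤ),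
      (∀ G ∈ L, IsImGen G) ∧
      L.prod.mulVec (vecr k a b) = vecr k a' b' ∧
      Even (a' i₁) ∧ Even (a' i₂) ∧
      (∀ i, i ≠ i₁ → i ≠ i₂ → a' i = a i ∧ b' i = b i) ∧
      ((a' i₁)^2 + 2*(b' i₁)^2) + ((a' i₂)^2 + 2*(b' i₂)^2)
        = ((a i₁)^2 + 2*(b i₁)^2) + ((a i₂)^2 + 2*(b i₂)^2) := by
  obtain ⟨m1, hm1⟩ := Int.not_even_iff_odd.mp h1
  obtain ⟨m2, hm2⟩ := Int.not_even_iff_odd.mp h2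
  have hFgen : IsImGen (levelOp ![i₁, i₂] Fmat) := Or.inr (Or.inr ⟨i₁, i₂, h12, rfl⟩)
  have hXgen : IsImGen (levelOp ![i₁, i₂] Xmat) := Or.inr (Or.inl ⟨i₁, i₂, h12, rfl⟩)
  by_cases hb : Even (b i₁ + b i₂)
  · -- same parity of b: apply F twice
    obtain ⟨r, hr⟩ := hb
    have hb2 : b i₂ = r + r - b i₁ := by omega
    refine ⟨[levelOp ![i₁, i₂] Fmat, levelOp ![i₁, i₂] Fmat],
      (fun i => if i = i₁ then -(b i₁ + b i₂) else if i = i₂ then b i₂ - b i₁ else a i),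
      (fun i => if i = i₁ then m1+m2+1 else if i = i₂ then m1-m2 else b i),
      ?_, ?_, ?_, ?_, ?_, ?_⟩
    · intro G hG
      rcases List.mem_cons.mp hG with h | h
      · subst h; exact hFgen
      · rw [List.mem_singleton] at h; subst h; exact hFgen
    · rw [List.prod_cons, List.prod_cons, List.prod_nil, mul_one, ← mulVec_mulVec,
        F_mulVec _ _ h12, F_mulVec _ _ h12]
      funext i
      by_cases hi1 : i = i₁
      · simp only [vecr, hi1, eq_self_iff_true, if_true, if_neg h12, if_neg h12.symm]
        rw [hm1, hm2]
        push_cast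
        linear_combination FF1 (m1:ℂ) (m2:ℂ) ((b i₁ : ℤ):ℂ) ((b i₂ : ℤ):ℂ) k
      · by_cases hi2 : i = i₂
        · simp only [vecr, hi2, eq_self_iff_true, if_true, if_neg h12, if_neg h12.symm,
            if_neg hi1]
          rw [hm1, hm2]
          push_cast
          linear_combination FF2 (m1:ℂ) (m2:ℂ) ((b i₁ : ℤ):ℂ) ((b i₂ : ℤ):ℂ) k
        · simp only [vecr, if_neg hi1, if_neg hi2]
    · simp only [eq_self_iff_true, if_true]
      exact ⟨-r, by omega⟩
    · simp only [if_neg h12.symm, eq_self_iff_true, if_true]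
      exact ⟨b i₂ - r, by omega⟩
    · intro i hi1 hi2
      refine ⟨?_, ?_⟩ <;> simp only [if_neg hi1, if_neg hi2]
    · simp only [eq_self_iff_true, if_true, if_neg h12.symm]
      rw [hm1, hm2, hb2]
      ring
  · -- different parity of b
    rw [Int.not_even_iff_odd] at hb
    obtain ⟨c, hc⟩ := hb
    have hb2 : b i₂ = 2*c + 1 - b i₁ := by omega
    by_cases hs : Even (m1 + m2 + 1 - b i₁)
    · -- single F works
      have hρ1 : (2:ℤ)*(m1+c+1) = (2*m1+1) + b i₁ + b i₂ := by omega
      have hρ2 : (2:ℤ)*(c+1+m2-b i₂) = b i₁ + (2*m2+1) - b i₂ := by omega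
      refine ⟨[levelOp ![i₁, i₂] Fmat],
        (fun i => if i = i₁ then m1+m2+1-b i₁ else if i = i₂ then m1-m2-b i₂ else a i),
        (fun i => if i = i₁ then m1+c+1 else if i = i₂ then c+1+m2-b i₂ else b i),
        ?_, ?_, ?_, ?_, ?_, ?_⟩
      · intro G hG
        rw [List.mem_singleton] at hG; subst hG; exact hFgen
      · rw [List.prod_cons, List.prod_nil, mul_one, F_mulVec _ _ h12]
        funext i
        by_cases hi1 : i = i₁
        · simp only [vecr, hi1, eq_self_iff_true, if_true, if_neg h12, if_neg h12.symm]
          rw [hm1, hm2]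
          push_cast
          refine Fa (m1:ℂ) (m2:ℂ) ((b i₁ : ℤ):ℂ) ((b i₂ : ℤ):ℂ) _ k ?_
          exact_mod_cast congrArg (Int.cast : ℤ → ℂ) hρ1
        · by_cases hi2 : i = i₂
          · simp only [vecr, hi2, eq_self_iff_true, if_true, if_neg h12, if_neg h12.symm,
              if_neg hi1]
            rw [hm1, hm2]
            push_cast
            refine Fb (m1:ℂ) (m2:ℂ) ((b i₁ : ℤ):ℂ) ((b i₂ : ℤ):ℂ) _ k ?_
            exact_mod_cast congrArg (Int.cast : ℤ → ℂ) hρ2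
          · simp only [vecr, if_neg hi1, if_neg hi2]
      · simp only [eq_self_iff_true, if_true]
        exact hs
      · simp only [if_neg h12.symm, eq_self_iff_true, if_true]
        rw [Int.even_iff] at hs ⊢
        omega
      · intro i hi1 hi2
        refine ⟨?_, ?_⟩ <;> simp only [if_neg hi1, if_neg hi2]
      · simp only [eq_self_iff_true, if_true, if_neg h12.symm]
        rw [hm1, hm2, hb2]
        ring
    · -- X then F
      have hρ1 : (2:ℤ)*(m2+c+1) = (2*m2+1) + b i₂ + b i₁ := by omega
      have hρ2 : (2:ℤ)*(c+1+m1-b i₁) = b i₂ + (2*m1+1) - b i₁ := by omega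
      refine ⟨[levelOp ![i₁, i₂] Fmat, levelOp ![i₁, i₂] Xmat],
        (fun i => if i = i₁ then m1+m2+1-b i₂ else if i = i₂ then m2-m1-b i₁ else a i),
        (fun i => if i = i₁ then m2+c+1 else if i = i₂ then c+1+m1-b i₁ else b i),
        ?_, ?_, ?_, ?_, ?_, ?_⟩
      · intro G hG
        rcases List.mem_cons.mp hG with h | h
        · subst h; exact hFgen
        · rw [List.mem_singleton] at h; subst h; exact hXgen
      · rw [List.prod_cons, List.prod_cons, List.prod_nil, mul_one, ← mulVec_mulVec,
          X_mulVec _ _ h12, F_mulVec _ _ h12]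
        funext i
        by_cases hi1 : i = i₁
        · simp only [vecr, hi1, eq_self_iff_true, if_true, if_neg h12, if_neg h12.symm]
          rw [hm1, hm2]
          push_cast
          have := Fa (m2:ℂ) (m1:ℂ) ((b i₂ : ℤ):ℂ) ((b i₁ : ℤ):ℂ)
            ((m2:ℂ)+(c:ℂ)+1) k (by exact_mod_cast congrArg (Int.cast : ℤ → ℂ) hρ1)
          linear_combination this
        · by_cases hi2 : i = i₂
          · simp only [vecr, hi2, eq_self_iff_true, if_true, if_neg h12, if_neg h12.symm,
              if_neg hi1]
            rw [hm1, hm2]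
            push_cast
            have := Fb (m2:ℂ) (m1:ℂ) ((b i₂ : ℤ):ℂ) ((b i₁ : ℤ):ℂ)
              ((c:ℂ)+1+(m1:ℂ)-((b i₁ : ℤ):ℂ)) k
              (by exact_mod_cast congrArg (Int.cast : ℤ → ℂ) hρ2)
            linear_combination this
          · simp only [vecr, if_neg hi1, if_neg hi2]
      · simp only [eq_self_iff_true, if_true]
        rw [Int.not_even_iff] at hs
        rw [Int.even_iff]
        omega
      · simp only [if_neg h12.symm, eq_self_iff_true, if_true]
        rw [Int.not_even_iff] at hs
        rw [Int.even_iff]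
        omega
      · intro i hi1 hi2
        refine ⟨?_, ?_⟩ <;> simp only [if_neg hi1, if_neg hi2]
      · simp only [eq_self_iff_true, if_true, if_neg h12.symm]
        rw [hm1, hm2, hb2]
        ring
lemma descent {n : ℕ} (k : ℕ) (a b : Fin n → ℤ) (h : ∀ i, Even (a i)) :
    ∃ a' b' : Fin n → ℤ,
      vecr (k+1) a b = vecr k a' b' ∧
      2 * (∑ i, ((a' i)^2 + 2*(b' i)^2)) = ∑ i, ((a i)^2 + 2*(b i)^2) := by
  have hhalf : ∀ i, 2 * (a i / 2) = a i := by
    intro i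
    have := (h i)
    rw [Int.even_iff] at this
    omega
  refine ⟨fun i => b i, fun i => -(a i / 2), ?_, ?_⟩
  · funext i
    have h2 : (2:ℂ) * ((a i / 2 : ℤ) : ℂ) = ((a i : ℤ) : ℂ) := by
      exact_mod_cast congrArg (Int.cast : ℤ → ℂ) (hhalf i)
    simp only [vecr]
    rw [div_eq_div_iff (pow_ne_zero _ ww_ne) (pow_ne_zero _ ww_ne), pow_succ]
    push_cast
    linear_combination (((a i / 2 : ℤ) : ℂ) * ww_sq - h2) * ww^k
  · rw [Finset.mul_sum]
    refine Finset.sum_congr rfl ?_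
    intro i _
    have h2 := hhalf i
    show 2 * ((b i)^2 + 2*(-(a i / 2))^2) = (a i)^2 + 2*(b i)^2
    linear_combination (2*(a i / 2) + a i) * h2

lemma reach_basis {n : ℕ} (j i₀ : Fin n) (v : Fin n → ℂ) (A : ℤ) (hA : A = 1 ∨ A = -1)
    (hv : v = fun i => if i = i₀ then (A:ℂ) else 0) :
    ∃ L : List (Matrix (Fin n) (Fin n) ℂ),
      (∀ G ∈ L, IsImGen G) ∧ L.prod.mulVec v = fun i => if i = j then (1:ℂ) else 0 := by
  subst hv
  by_cases hij : i₀ = j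
  · subst hij
    rcases hA with hA | hA
    · refine ⟨[], by simp, ?_⟩
      rw [List.prod_nil, one_mulVec]
      funext i
      subst hA
      by_cases hi : i = i₀ <;> simp [hi]
    · refine ⟨[levelOp ![i₀] !![-1]], ?_, ?_⟩
      · intro G hG
        rw [List.mem_singleton] at hG; subst hG
        exact Or.inl ⟨i₀, rfl⟩
      · rw [List.prod_cons, List.prod_nil, mul_one, N_mulVec]
        funext i
        subst hA
        by_cases hi : i = i₀ <;> simp [hi]
  · rcases hA with hA | hA
    · refine ⟨[levelOp ![i₀, j] Xmat], ?_, ?_⟩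
      · intro G hG
        rw [List.mem_singleton] at hG; subst hG
        exact Or.inr (Or.inl ⟨i₀, j, hij, rfl⟩)
      · rw [List.prod_cons, List.prod_nil, mul_one, X_mulVec _ _ hij]
        funext i
        subst hA
        by_cases h1 : i = i₀
        · simp [h1, hij, Ne.symm hij]
        · by_cases h2 : i = j
          · simp [h1, h2, hij, Ne.symm hij]
          · simp [h1, h2]
    · refine ⟨[levelOp ![j] !![-1], levelOp ![i₀, j] Xmat], ?_, ?_⟩
      · intro G hG
        rcases List.mem_cons.mp hG with h | h
        · subst h; exact Or.inl ⟨j, rfl⟩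
        · rw [List.mem_singleton] at h; subst h
          exact Or.inr (Or.inl ⟨i₀, j, hij, rfl⟩)
      · rw [List.prod_cons, List.prod_cons, List.prod_nil, mul_one, ← mulVec_mulVec,
          X_mulVec _ _ hij, N_mulVec]
        funext i
        subst hA
        by_cases h1 : i = i₀
        · simp [h1, hij, Ne.symm hij]
        · by_cases h2 : i = j
          · simp [h1, h2, hij, Ne.symm hij]
          · simp [h1, h2]

lemma base_case {n : ℕ} (j : Fin n) (a b : Fin n → ℤ)
    (hnorm : (∑ i, ((a i)^2 + 2*(b i)^2)) = 1) :
    ∃ L : List (Matrix (Fin n) (Fin n) ℂ),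
      (∀ G ∈ L, IsImGen G) ∧
      L.prod.mulVec (vecr 0 a b) = fun i => if i = j then (1:ℂ) else 0 := by
  set f : Fin n → ℤ := fun i => (a i)^2 + 2*(b i)^2 with hf
  have hfnn : ∀ i, 0 ≤ f i := by
    intro i
    have := sq_nonneg (a i)
    have := sq_nonneg (b i)
    simp only [hf]
    nlinarith
  have hex : ∃ i₀, f i₀ ≠ 0 := by
    by_contra hcon
    push_neg at hcon
    have : ∑ i, f i = 0 := Finset.sum_eq_zero (fun i _ => hcon i)
    rw [hnorm] at this
    norm_num at this
  obtain ⟨i₀, hi₀⟩ := hex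
  have hle : f i₀ ≤ 1 := by
    rw [← hnorm]
    exact Finset.single_le_sum (fun i _ => hfnn i) (Finset.mem_univ i₀)
  have hfi₀ : f i₀ = 1 := by
    have := hfnn i₀
    omega
  have hrest : ∀ i, i ≠ i₀ → f i = 0 := by
    have hsum0 : ∑ i ∈ Finset.univ.erase i₀, f i = 0 := by
      have := Finset.add_sum_erase Finset.univ f (Finset.mem_univ i₀)
      rw [hnorm, hfi₀] at this
      omega
    intro i hi
    exact (Finset.sum_eq_zero_iff_of_nonneg (fun i _ => hfnn i)).mp hsum0 i
      (Finset.mem_erase.mpr ⟨hi, Finset.mem_univ i⟩)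
  have hfi₀' : (a i₀)^2 + 2*(b i₀)^2 = 1 := hfi₀
  have hb0 : b i₀ = 0 := by
    by_contra hbne
    have h1 : 1 ≤ |b i₀| := Int.one_le_abs (by simpa using hbne)
    have h2 : 1 ≤ (b i₀)^2 := by nlinarith [_root_.sq_abs (b i₀)]
    nlinarith [sq_nonneg (a i₀), hfi₀']
  have ha1 : a i₀ = 1 ∨ a i₀ = -1 := by
    have hA2 : (a i₀)^2 = 1 := by
      rw [hb0] at hfi₀'
      nlinarith [hfi₀']
    have : (a i₀ - 1) * (a i₀ + 1) = 0 := by linear_combination hA2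
    rcases mul_eq_zero.mp this with h | h
    · left; omega
    · right; omega
  have hv : vecr 0 a b = fun i => if i = i₀ then ((a i₀ : ℤ) : ℂ) else 0 := by
    funext i
    simp only [vecr, pow_zero, div_one]
    by_cases hi : i = i₀
    · subst hi
      rw [hb0]
      push_cast
      simp
    · have hz : (a i)^2 + 2*(b i)^2 = 0 := hrest i hi
      have h1 := sq_nonneg (a i)
      have h2 := sq_nonneg (b i)
      have ha : a i = 0 := by
        have h3 : (a i)^2 ≤ 0 := by nlinarith
        exact pow_eq_zero_iff (two_ne_zero) |>.mp (le_antisymm h3 h1)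
      have hbb : b i = 0 := by
        have h3 : (b i)^2 ≤ 0 := by nlinarith
        exact pow_eq_zero_iff (two_ne_zero) |>.mp (le_antisymm h3 h2)
      rw [if_neg hi, ha, hbb]
      push_cast
      ring
  rw [hv]
  exact reach_basis j i₀ _ (a i₀) ha1 rfl
lemma card_odd_even {n : ℕ} (k : ℕ) (a b : Fin n → ℤ)
    (hnorm : (∑ i, ((a i)^2 + 2*(b i)^2)) = 2^(k+1)) :
    2 ∣ (Finset.univ.filter (fun i => ¬ Even (a i))).card := by
  have hcast := congrArg (Int.cast : ℤ → ZMod 2) hnorm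
  push_cast at hcast
  have h2z : (2 : ZMod 2) = 0 := by decide
  have hsq : ∀ x : ZMod 2, x^2 = x := by decide
  rw [h2z] at hcast
  simp only [zero_pow (Nat.succ_ne_zero k), zero_mul, add_zero] at hcast
  have hsum : ∑ i, ((a i : ZMod 2)) = 0 := by
    rw [← hcast]
    exact Finset.sum_congr rfl (fun i _ => (hsq _).symm)
  have hind : ∀ i : Fin n, ((a i : ZMod 2)) = if ¬ Even (a i) then 1 else 0 := by
    intro i
    by_cases h : Even (a i)
    · rw [if_neg (not_not_intro h), ZMod.intCast_zmod_eq_zero_iff_dvd]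
      exact h.two_dvd
    · obtain ⟨m, hm⟩ := Int.not_even_iff_odd.mp h
      simp only [h, not_false_iff, if_pos]
      rw [hm]
      push_cast
      rw [h2z]
      ring
  rw [Finset.sum_congr rfl (fun i _ => hind i), Finset.sum_boole] at hsum
  have := (ZMod.natCast_eq_zero_iff _ 2).mp hsum
  exact this

lemma main_lemma {n : ℕ} (j : Fin n) :
    ∀ (μ k : ℕ) (a b : Fin n → ℤ),
      k * (n+1) + (Finset.univ.filter (fun i => ¬ Even (a i))).card ≤ μ →
      (∑ i, ((a i)^2 + 2*(b i)^2)) = 2^k →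
      ∃ L : List (Matrix (Fin n) (Fin n) ℂ),
        (∀ G ∈ L, IsImGen G) ∧
        L.prod.mulVec (vecr k a b) = fun i => if i = j then (1:ℂ) else 0 := by
  intro μ
  induction μ using Nat.strong_induction_on with
  | _ μ IH =>
    intro k a b hμ hnorm
    match k with
    | 0 =>
      exact base_case j a b (by simpa using hnorm)
    | (k+1) =>
      by_cases hall : ∀ i, Even (a i)
      · obtain ⟨a', b', heq, hnorm2⟩ := descent k a b hall
        have hnorm' : (∑ i, ((a' i)^2 + 2*(b' i)^2)) = 2^k := by
          have h2 : (2:ℤ)^(k+1) = 2 * 2^k := by ring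
          rw [hnorm, h2] at hnorm2
          linarith
        have hcard : (Finset.univ.filter (fun i => ¬ Even (a' i))).card ≤ n := by
          calc (Finset.univ.filter (fun i => ¬ Even (a' i))).card
              ≤ Finset.univ.card := Finset.card_filter_le _ _
            _ = n := by simp
        have hlt : k * (n+1) + (Finset.univ.filter (fun i => ¬ Even (a' i))).card < μ := by
          have : (k+1) * (n+1) ≤ μ := le_trans (Nat.le_add_right _ _) hμ
          nlinarith
        obtain ⟨L, hL, hLe⟩ := IH _ hlt k a' b' (le_refl _) hnorm'
        exact ⟨L, hL, by rw [heq]; exact hLe⟩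
      · push_neg at hall
        obtain ⟨i₀, hi₀⟩ := hall
        set S := Finset.univ.filter (fun i => ¬ Even (a i)) with hS
        have hne : i₀ ∈ S := Finset.mem_filter.mpr ⟨Finset.mem_univ _, hi₀⟩
        have hdvd : 2 ∣ S.card := card_odd_even k a b hnorm
        have hcard1 : 1 ≤ S.card := Finset.card_pos.mpr ⟨i₀, hne⟩
        have hcard2 : 2 ≤ S.card := by omega
        obtain ⟨i₁, hi₁, i₂, hi₂, h12⟩ := Finset.one_lt_card.mp hcard2
        have ho1 : ¬ Even (a i₁) := (Finset.mem_filter.mp hi₁).2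
        have ho2 : ¬ Even (a i₂) := (Finset.mem_filter.mp hi₂).2
        obtain ⟨L₀, a', b', hgen₀, hmul₀, hev1, hev2, hout, hsum2⟩ :=
          pair_step (k+1) i₁ i₂ h12 a b ho1 ho2
        have hnorm' : (∑ i, ((a' i)^2 + 2*(b' i)^2)) = 2^(k+1) := by
          rw [← hnorm]
          exact sum_diff_two _ _ i₁ i₂ h12
            (fun i h1 h2 => by rw [(hout i h1 h2).1, (hout i h1 h2).2]) hsum2
        have hsubset : (Finset.univ.filter (fun i => ¬ Even (a' i))) ⊆ S \ {i₁, i₂} := by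
          intro x hx
          have hxo : ¬ Even (a' x) := (Finset.mem_filter.mp hx).2
          have hx1 : x ≠ i₁ := by rintro rfl; exact hxo hev1
          have hx2 : x ≠ i₂ := by rintro rfl; exact hxo hev2
          rw [Finset.mem_sdiff]
          refine ⟨Finset.mem_filter.mpr ⟨Finset.mem_univ _, ?_⟩, ?_⟩
          · rw [← (hout x hx1 hx2).1]; exact hxo
          · simp [hx1, hx2]
        have hpair : ({i₁, i₂} : Finset (Fin n)) ⊆ S :=
          Finset.insert_subset_iff.mpr ⟨hi₁, Finset.singleton_subset_iff.mpr hi₂⟩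
        have hcard' : (Finset.univ.filter (fun i => ¬ Even (a' i))).card ≤ S.card - 2 := by
          calc (Finset.univ.filter (fun i => ¬ Even (a' i))).card
              ≤ (S \ {i₁, i₂}).card := Finset.card_le_card hsubset
            _ = S.card - 2 := by rw [Finset.card_sdiff_of_subset hpair, Finset.card_pair h12]
        have hlt : (k+1) * (n+1) + (Finset.univ.filter (fun i => ¬ Even (a' i))).card < μ := by
          omega
        obtain ⟨L₁, hL₁, hLe₁⟩ := IH _ hlt (k+1) a' b' (le_refl _) hnorm'
        refine ⟨L₁ ++ L₀, ?_, ?_⟩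
        · intro G hG
          rcases List.mem_append.mp hG with h | h
          exacts [hL₁ G h, hgen₀ G h]
        · rw [List.prod_append, ← mulVec_mulVec, hmul₀, hLe₁]
lemma ww_conj : (starRingEnd ℂ) ww = -ww := by
  simp [ww]

/-- Every unit vector over `ℤ[1/(i√2)]` can be reduced to any standard basis
vector `e_j` by generators `(-1)_[a]`, `X_[a,b]`, `F_[a,b]`. -/
theorem stmt17 (n : ℕ) (hn : 1 ≤ n) (j : Fin n) (v : Fin n → ℂ)
    (hunit : ∑ k, (starRingEnd ℂ) (v k) * v k = 1)
    (hR : ∀ k, InDIrt2 (v k)) :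
    ∃ L : List (Matrix (Fin n) (Fin n) ℂ),
      (∀ G ∈ L, IsImGen G) ∧
      L.prod.mulVec v = fun k => if k = j then (1 : ℂ) else 0 := by
  choose x₀ x₁ hx₀ hx₁ hveq using hR
  choose u₀ q₀ hu₀ using hx₀
  choose u₁ q₁ hu₁ using hx₁
  set Q := Finset.univ.sup (fun i => max (q₀ i) (q₁ i)) with hQdef
  have hq₀ : ∀ i, q₀ i ≤ Q := by
    intro i
    have h := Finset.le_sup (f := fun i => max (q₀ i) (q₁ i)) (Finset.mem_univ i)
    exact le_trans (le_max_left _ _) h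
  have hq₁ : ∀ i, q₁ i ≤ Q := by
    intro i
    have h := Finset.le_sup (f := fun i => max (q₀ i) (q₁ i)) (Finset.mem_univ i)
    exact le_trans (le_max_right _ _) h
  set α : Fin n → ℤ := fun i => u₀ i * 2^(Q - q₀ i) with hα
  set β : Fin n → ℤ := fun i => u₁ i * 2^(Q - q₁ i) with hβ
  have h2Q : (2:ℂ)^Q ≠ 0 := pow_ne_zero _ two_ne_zero
  have hkey : ∀ (u : ℤ) (q : ℕ), q ≤ Q → ((u * 2^(Q-q) : ℤ) : ℂ)/2^Q = (u:ℂ)/2^q := by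
    intro u q hq
    have hqq : Q - q + q = Q := Nat.sub_add_cancel hq
    push_cast
    rw [div_eq_div_iff h2Q (pow_ne_zero _ two_ne_zero)]
    rw [mul_assoc, ← pow_add, hqq]
  have hvi : ∀ i, v i = ((α i : ℂ) + (β i : ℂ) * ww)/2^Q := by
    intro i
    rw [hveq i, hu₀ i, hu₁ i, ← hkey (u₀ i) (q₀ i) (hq₀ i), ← hkey (u₁ i) (q₁ i) (hq₁ i)]
    show ((α i : ℤ):ℂ)/2^Q + (((β i : ℤ):ℂ)/2^Q) * ww = ((α i:ℂ) + (β i:ℂ)*ww)/2^Q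
    ring
  -- integer norm equation
  have hconj : ∀ i, (starRingEnd ℂ) (v i) * v i = ((α i^2 + 2*β i^2 : ℤ):ℂ)/4^Q := by
    intro i
    rw [hvi i]
    rw [map_div₀, map_add, _root_.map_mul, ww_conj, map_pow]
    rw [map_intCast (starRingEnd ℂ) (α i), map_intCast (starRingEnd ℂ) (β i)]
    have h2 : (starRingEnd ℂ) (2 : ℂ) = 2 := by
      rw [show (2:ℂ) = ((2:ℝ):ℂ) by norm_num, Complex.conj_ofReal]
    rw [h2, div_mul_div_comm, ← mul_pow]
    have hnum : ((α i:ℂ) + (β i:ℂ) * -ww) * ((α i:ℂ) + (β i:ℂ)*ww)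
        = ((α i^2 + 2*β i^2 : ℤ):ℂ) := by
      push_cast
      linear_combination (-(β i:ℂ)^2) * ww_sq
    rw [hnum]
    norm_num
  have hsum1 : (∑ i, ((α i^2 + 2*β i^2 : ℤ):ℂ))/4^Q = 1 := by
    rw [← hunit, Finset.sum_div]
    exact (Finset.sum_congr rfl (fun i _ => (hconj i).symm))
  have hsumC : (∑ i, ((α i^2 + 2*β i^2 : ℤ):ℂ)) = 4^Q := by
    rw [div_eq_iff (pow_ne_zero _ (by norm_num : (4:ℂ) ≠ 0)), one_mul] at hsum1
    exact hsum1
  have hZ : ∑ i, (α i^2 + 2*β i^2) = 4^Q := by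
    have : ((∑ i, (α i^2 + 2*β i^2) : ℤ) : ℂ) = ((4^Q : ℤ) : ℂ) := by
      push_cast
      push_cast at hsumC
      rw [hsumC]
    exact_mod_cast this
  -- signed representation
  set a : Fin n → ℤ := fun i => (-1)^Q * α i with ha
  set b : Fin n → ℤ := fun i => (-1)^Q * β i with hb
  have hsgn : ((-1:ℤ)^Q)^2 = 1 := by
    rw [← pow_mul, mul_comm, pow_mul]
    norm_num
  have hnorm : (∑ i, ((a i)^2 + 2*(b i)^2)) = 2^(2*Q) := by
    have he : ∀ i, (a i)^2 + 2*(b i)^2 = α i^2 + 2*β i^2 := by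
      intro i
      simp only [ha, hb]
      linear_combination (α i^2 + 2*β i^2) * hsgn
    rw [Finset.sum_congr rfl (fun i _ => he i), hZ, pow_mul]
    norm_num
  have hwwQ : ww^(2*Q) = (-1)^Q * 2^Q := by
    rw [pow_mul, ww_sq]
    rw [neg_pow]
  have hvec : vecr (2*Q) a b = v := by
    funext i
    rw [hvi i]
    simp only [vecr, ha, hb, hwwQ]
    push_cast
    have hden : ((-1:ℂ))^Q * 2^Q ≠ 0 := by
      apply mul_ne_zero _ h2Q
      apply pow_ne_zero
      norm_num
    rw [div_eq_div_iff hden h2Q]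
    ring
  obtain ⟨L, hL, hLe⟩ := main_lemma j
    ((2*Q) * (n+1) + (Finset.univ.filter (fun i => ¬ Even (a i))).card)
    (2*Q) a b (le_refl _) hnorm
  rw [hvec] at hLe
  exact ⟨L, hL, hLe⟩
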